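/- Define in the 3×3 real matrices (with E_{ij} the matrix units): h₁ := E₁₁ + E₂₂, h₂ := E₂₂ + E₃₃, e₁⁺ := E₁₂, e₂⁺ := E₂₃, e₁⁻ := E₂₁, e₂⁻ := E₃₂, E := E₁₃, F := E₃₁, with parities |h₁| = |h₂| = |E| = |F| = 0 and |e₁^±| = |e₂^±| = 1. Let ψ be the linear map on the span of these eight matrices determined by ψ(e₁⁺) = e₂⁺, ψ(e₂⁺) = e₁⁺, ψ(e₁⁻) = −e₂⁻, ψ(e₂⁻) = −e₁⁻, ψ(h₁) = −h₂, ψ(h₂) = −h₁, ψ(E) = E, ψ(F) = F. Then: (i) the eight matrices are linearly independent and their span is closed under the superbracket [X,Y] := XY − (−1)^{|X||Y|}YX (X, Y homogeneous, ordinary matrix product); (ii) ψ∘ψ = id; (iii) for all homogeneous X, Y in the span, ψ([X,Y]) = [ψ(X), ψ(Y)] (where ψ preserves parity). Hence ψ is an involutive automorphism of the Lie superalgebra 𝔰𝔩(1|2). -/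

import Mathlib

/- STATEMENT 15: the realization of 𝔰𝔩(1|2) ≅ 𝔬𝔰𝔭(2|2) by 3×3 matrices: the eight
generators are linearly independent, their span is closed under the superbracket,
and ψ is an involutive automorphism of the Lie superalgebra. -/

noncomputable section

/-- h₁ = E₁₁ + E₂₂ -/
def h₁ : Matrix (Fin 3) (Fin 3) ℝ := !![1, 0, 0; 0, 1, 0; 0, 0, 0]
/-- h₂ = E₂₂ + E₃₃ -/
def h₂ : Matrix (Fin 3) (Fin 3) ℝ := !![0, 0, 0; 0, 1, 0; 0, 0, 1]
/-- e₁⁺ = E₁₂ -/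
def e₁p : Matrix (Fin 3) (Fin 3) ℝ := !![0, 1, 0; 0, 0, 0; 0, 0, 0]
/-- e₂⁺ = E₂₃ -/
def e₂p : Matrix (Fin 3) (Fin 3) ℝ := !![0, 0, 0; 0, 0, 1; 0, 0, 0]
/-- e₁⁻ = E₂₁ -/
def e₁m : Matrix (Fin 3) (Fin 3) ℝ := !![0, 0, 0; 1, 0, 0; 0, 0, 0]
/-- e₂⁻ = E₃₂ -/
def e₂m : Matrix (Fin 3) (Fin 3) ℝ := !![0, 0, 0; 0, 0, 0; 0, 1, 0]
/-- E = E₁₃ -/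
def Emat : Matrix (Fin 3) (Fin 3) ℝ := !![0, 0, 1; 0, 0, 0; 0, 0, 0]
/-- F = E₃₁ -/
def Fmat : Matrix (Fin 3) (Fin 3) ℝ := !![0, 0, 0; 0, 0, 0; 1, 0, 0]

/-- The eight generators of 𝔰𝔩(1|2). -/
def gen : Fin 8 → Matrix (Fin 3) (Fin 3) ℝ :=
  ![h₁, h₂, e₁p, e₂p, e₁m, e₂m, Emat, Fmat]

/-- The even part: span of h₁, h₂, E, F. -/
def evenPart : Submodule ℝ (Matrix (Fin 3) (Fin 3) ℝ) :=
  Submodule.span ℝ {h₁, h₂, Emat, Fmat}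

/-- The odd part: span of e₁⁺, e₂⁺, e₁⁻, e₂⁻. -/
def oddPart : Submodule ℝ (Matrix (Fin 3) (Fin 3) ℝ) :=
  Submodule.span ℝ {e₁p, e₂p, e₁m, e₂m}

/-- 𝔰𝔩(1|2) as the span of the eight generators. -/
def sl12 : Submodule ℝ (Matrix (Fin 3) (Fin 3) ℝ) := evenPart ⊔ oddPart

/-- The involution ψ as an explicit linear map on all 3×3 matrices. -/
def ψmap : Matrix (Fin 3) (Fin 3) ℝ →ₗ[ℝ] Matrix (Fin 3) (Fin 3) ℝ where
  toFun M := !![-M 2 2, M 1 2, M 0 2; -M 2 1, -M 1 1, M 0 1; M 2 0, -M 1 0, -M 0 0]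
  map_add' M N := by
    ext i j
    fin_cases i <;> fin_cases j <;> simp [Matrix.vecHead, Matrix.vecTail, Matrix.add_apply] <;> ring
  map_smul' c M := by
    ext i j
    fin_cases i <;> fin_cases j <;> simp [Matrix.vecHead, Matrix.vecTail, Matrix.smul_apply] <;> ring

lemma ψmap_apply (M : Matrix (Fin 3) (Fin 3) ℝ) :
    ψmap M = !![-M 2 2, M 1 2, M 0 2; -M 2 1, -M 1 1, M 0 1; M 2 0, -M 1 0, -M 0 0] := rfl

lemma mem_evenPart_iff (M : Matrix (Fin 3) (Fin 3) ℝ) :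
    M ∈ evenPart ↔ M 0 1 = 0 ∧ M 1 0 = 0 ∧ M 1 2 = 0 ∧ M 2 1 = 0 ∧ M 1 1 = M 0 0 + M 2 2 := by
  constructor
  · intro h
    induction h using Submodule.span_induction with
    | mem x hx =>
      simp only [Set.mem_insert_iff, Set.mem_singleton_iff] at hx
      rcases hx with rfl | rfl | rfl | rfl <;> norm_num [Matrix.vecHead, Matrix.vecTail, h₁, h₂, Emat, Fmat, Matrix.cons_val_two]
    | zero => norm_num
    | add x y _ _ hx hy =>
      obtain ⟨a1, a2, a3, a4, a5⟩ := hx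
      obtain ⟨b1, b2, b3, b4, b5⟩ := hy
      refine ⟨?_, ?_, ?_, ?_, ?_⟩ <;> simp [Matrix.vecHead, Matrix.vecTail, Matrix.add_apply, a1, a2, a3, a4, a5, b1, b2, b3, b4, b5] <;> ring
    | smul c x _ hx =>
      obtain ⟨a1, a2, a3, a4, a5⟩ := hx
      refine ⟨?_, ?_, ?_, ?_, ?_⟩ <;> simp [Matrix.vecHead, Matrix.vecTail, Matrix.smul_apply, a1, a2, a3, a4, a5] <;> ring
  · rintro ⟨a1, a2, a3, a4, a5⟩
    have hM : M = M 0 0 • h₁ + M 2 2 • h₂ + M 0 2 • Emat + M 2 0 • Fmat := by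
      ext i j
      fin_cases i <;> fin_cases j <;>
        simp [Matrix.vecHead, Matrix.vecTail, h₁, h₂, Emat, Fmat, Matrix.add_apply, Matrix.smul_apply, a1, a2, a3, a4, a5]
    rw [hM]
    have m1 : h₁ ∈ ({h₁, h₂, Emat, Fmat} : Set (Matrix (Fin 3) (Fin 3) ℝ)) := by simp
    have m2 : h₂ ∈ ({h₁, h₂, Emat, Fmat} : Set (Matrix (Fin 3) (Fin 3) ℝ)) := by simp
    have m3 : Emat ∈ ({h₁, h₂, Emat, Fmat} : Set (Matrix (Fin 3) (Fin 3) ℝ)) := by simp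
    have m4 : Fmat ∈ ({h₁, h₂, Emat, Fmat} : Set (Matrix (Fin 3) (Fin 3) ℝ)) := by simp
    exact add_mem (add_mem (add_mem
      (Submodule.smul_mem _ _ (Submodule.subset_span m1))
      (Submodule.smul_mem _ _ (Submodule.subset_span m2)))
      (Submodule.smul_mem _ _ (Submodule.subset_span m3)))
      (Submodule.smul_mem _ _ (Submodule.subset_span m4))

lemma mem_oddPart_iff (M : Matrix (Fin 3) (Fin 3) ℝ) :
    M ∈ oddPart ↔ M 0 0 = 0 ∧ M 0 2 = 0 ∧ M 1 1 = 0 ∧ M 2 0 = 0 ∧ M 2 2 = 0 := by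
  constructor
  · intro h
    induction h using Submodule.span_induction with
    | mem x hx =>
      simp only [Set.mem_insert_iff, Set.mem_singleton_iff] at hx
      rcases hx with rfl | rfl | rfl | rfl <;> norm_num [Matrix.vecHead, Matrix.vecTail, e₁p, e₂p, e₁m, e₂m, Matrix.cons_val_two]
    | zero => norm_num
    | add x y _ _ hx hy =>
      obtain ⟨a1, a2, a3, a4, a5⟩ := hx
      obtain ⟨b1, b2, b3, b4, b5⟩ := hy
      refine ⟨?_, ?_, ?_, ?_, ?_⟩ <;> simp [Matrix.vecHead, Matrix.vecTail, Matrix.add_apply, a1, a2, a3, a4, a5, b1, b2, b3, b4, b5]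
    | smul c x _ hx =>
      obtain ⟨a1, a2, a3, a4, a5⟩ := hx
      refine ⟨?_, ?_, ?_, ?_, ?_⟩ <;> simp [Matrix.vecHead, Matrix.vecTail, Matrix.smul_apply, a1, a2, a3, a4, a5]
  · rintro ⟨a1, a2, a3, a4, a5⟩
    have hM : M = M 0 1 • e₁p + M 1 2 • e₂p + M 1 0 • e₁m + M 2 1 • e₂m := by
      ext i j
      fin_cases i <;> fin_cases j <;>
        simp [Matrix.vecHead, Matrix.vecTail, e₁p, e₂p, e₁m, e₂m, Matrix.add_apply, Matrix.smul_apply, a1, a2, a3, a4, a5]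
    rw [hM]
    have m1 : e₁p ∈ ({e₁p, e₂p, e₁m, e₂m} : Set (Matrix (Fin 3) (Fin 3) ℝ)) := by simp
    have m2 : e₂p ∈ ({e₁p, e₂p, e₁m, e₂m} : Set (Matrix (Fin 3) (Fin 3) ℝ)) := by simp
    have m3 : e₁m ∈ ({e₁p, e₂p, e₁m, e₂m} : Set (Matrix (Fin 3) (Fin 3) ℝ)) := by simp
    have m4 : e₂m ∈ ({e₁p, e₂p, e₁m, e₂m} : Set (Matrix (Fin 3) (Fin 3) ℝ)) := by simp
    exact add_mem (add_mem (add_mem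
      (Submodule.smul_mem _ _ (Submodule.subset_span m1))
      (Submodule.smul_mem _ _ (Submodule.subset_span m2)))
      (Submodule.smul_mem _ _ (Submodule.subset_span m3)))
      (Submodule.smul_mem _ _ (Submodule.subset_span m4))

lemma mem_sl12_iff (M : Matrix (Fin 3) (Fin 3) ℝ) :
    M ∈ sl12 ↔ M 1 1 = M 0 0 + M 2 2 := by
  constructor
  · intro h
    rw [sl12, Submodule.mem_sup] at h
    obtain ⟨a, ha, b, hb, rfl⟩ := h
    rw [mem_evenPart_iff] at ha
    rw [mem_oddPart_iff] at hb
    obtain ⟨b1, b2, b3, b4, b5⟩ := hb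
    simp only [Matrix.add_apply, ha.2.2.2.2, b1, b3, b5]
    try ring
  · intro h
    have hM : M = (!![M 0 0, 0, M 0 2; 0, M 1 1, 0; M 2 0, 0, M 2 2] : Matrix (Fin 3) (Fin 3) ℝ)
        + (!![0, M 0 1, 0; M 1 0, 0, M 1 2; 0, M 2 1, 0] : Matrix (Fin 3) (Fin 3) ℝ) := by
      ext i j
      fin_cases i <;> fin_cases j <;> simp [Matrix.vecHead, Matrix.vecTail, Matrix.add_apply]
    rw [sl12, Submodule.mem_sup]
    refine ⟨_, ?_, _, ?_, hM.symm⟩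
    · rw [mem_evenPart_iff]; norm_num [Matrix.vecHead, Matrix.vecTail, h, Matrix.cons_val_two]
    · rw [mem_oddPart_iff]; norm_num [Matrix.cons_val_two]

set_option maxHeartbeats 4000000 in
theorem stmt15 :
    -- (i) linear independence
    LinearIndependent ℝ gen ∧
    -- (i) closure of the span under the superbracket [X,Y] = XY − (−1)^{|X||Y|}YX
    (∀ X Y : Matrix (Fin 3) (Fin 3) ℝ,
      X ∈ evenPart → Y ∈ evenPart → X * Y - Y * X ∈ sl12) ∧
    (∀ X Y : Matrix (Fin 3) (Fin 3) ℝ,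
      X ∈ evenPart → Y ∈ oddPart → X * Y - Y * X ∈ sl12) ∧
    (∀ X Y : Matrix (Fin 3) (Fin 3) ℝ,
      X ∈ oddPart → Y ∈ evenPart → X * Y - Y * X ∈ sl12) ∧
    (∀ X Y : Matrix (Fin 3) (Fin 3) ℝ,
      X ∈ oddPart → Y ∈ oddPart → X * Y + Y * X ∈ sl12) ∧
    -- ψ: the parity-preserving linear map determined by the given generator values,
    -- which is an involution (ii) and respects the superbracket (iii)
    (∃ ψ : Matrix (Fin 3) (Fin 3) ℝ →ₗ[ℝ] Matrix (Fin 3) (Fin 3) ℝ,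
      ψ e₁p = e₂p ∧ ψ e₂p = e₁p ∧ ψ e₁m = -e₂m ∧ ψ e₂m = -e₁m ∧
      ψ h₁ = -h₂ ∧ ψ h₂ = -h₁ ∧ ψ Emat = Emat ∧ ψ Fmat = Fmat ∧
      (∀ X ∈ evenPart, ψ X ∈ evenPart) ∧ (∀ X ∈ oddPart, ψ X ∈ oddPart) ∧
      (∀ X ∈ sl12, ψ (ψ X) = X) ∧
      (∀ X Y : Matrix (Fin 3) (Fin 3) ℝ, X ∈ evenPart → Y ∈ evenPart →
        ψ (X * Y - Y * X) = ψ X * ψ Y - ψ Y * ψ X) ∧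
      (∀ X Y : Matrix (Fin 3) (Fin 3) ℝ, X ∈ evenPart → Y ∈ oddPart →
        ψ (X * Y - Y * X) = ψ X * ψ Y - ψ Y * ψ X) ∧
      (∀ X Y : Matrix (Fin 3) (Fin 3) ℝ, X ∈ oddPart → Y ∈ evenPart →
        ψ (X * Y - Y * X) = ψ X * ψ Y - ψ Y * ψ X) ∧
      (∀ X Y : Matrix (Fin 3) (Fin 3) ℝ, X ∈ oddPart → Y ∈ oddPart →
        ψ (X * Y + Y * X) = ψ X * ψ Y + ψ Y * ψ X)) := by
  refine ⟨?_, ?_, ?_, ?_, ?_, ?_⟩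
  · -- linear independence
    rw [Fintype.linearIndependent_iff]
    intro g hg i
    fin_cases i
    · have := congrFun (congrFun hg 0) 0
      simpa [Matrix.vecHead, Matrix.vecTail, gen, Fin.sum_univ_succ, h₁, h₂, e₁p, e₂p, e₁m, e₂m, Emat, Fmat] using this
    · have := congrFun (congrFun hg 2) 2
      simpa [Matrix.vecHead, Matrix.vecTail, gen, Fin.sum_univ_succ, h₁, h₂, e₁p, e₂p, e₁m, e₂m, Emat, Fmat] using this
    · have := congrFun (congrFun hg 0) 1
      simpa [Matrix.vecHead, Matrix.vecTail, gen, Fin.sum_univ_succ, h₁, h₂, e₁p, e₂p, e₁m, e₂m, Emat, Fmat] using this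
    · have := congrFun (congrFun hg 1) 2
      simpa [Matrix.vecHead, Matrix.vecTail, gen, Fin.sum_univ_succ, h₁, h₂, e₁p, e₂p, e₁m, e₂m, Emat, Fmat] using this
    · have := congrFun (congrFun hg 1) 0
      simpa [Matrix.vecHead, Matrix.vecTail, gen, Fin.sum_univ_succ, h₁, h₂, e₁p, e₂p, e₁m, e₂m, Emat, Fmat] using this
    · have := congrFun (congrFun hg 2) 1
      simpa [Matrix.vecHead, Matrix.vecTail, gen, Fin.sum_univ_succ, h₁, h₂, e₁p, e₂p, e₁m, e₂m, Emat, Fmat] using this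
    · have := congrFun (congrFun hg 0) 2
      simpa [Matrix.vecHead, Matrix.vecTail, gen, Fin.sum_univ_succ, h₁, h₂, e₁p, e₂p, e₁m, e₂m, Emat, Fmat] using this
    · have := congrFun (congrFun hg 2) 0
      simpa [Matrix.vecHead, Matrix.vecTail, gen, Fin.sum_univ_succ, h₁, h₂, e₁p, e₂p, e₁m, e₂m, Emat, Fmat] using this
  · -- even, even
    intro X Y hX hY
    rw [mem_evenPart_iff] at hX hY
    obtain ⟨a1, a2, a3, a4, a5⟩ := hX
    obtain ⟨b1, b2, b3, b4, b5⟩ := hY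
    rw [mem_sl12_iff]
    simp [Matrix.vecHead, Matrix.vecTail, Matrix.sub_apply, Matrix.mul_apply, Fin.sum_univ_three, a1, a2, a3, a4, a5, b1, b2, b3, b4, b5]
    try ring
  · -- even, odd
    intro X Y hX hY
    rw [mem_evenPart_iff] at hX
    rw [mem_oddPart_iff] at hY
    obtain ⟨a1, a2, a3, a4, a5⟩ := hX
    obtain ⟨b1, b2, b3, b4, b5⟩ := hY
    rw [mem_sl12_iff]
    simp [Matrix.vecHead, Matrix.vecTail, Matrix.sub_apply, Matrix.mul_apply, Fin.sum_univ_three, a1, a2, a3, a4, a5, b1, b2, b3, b4, b5]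
    try ring
  · -- odd, even
    intro X Y hX hY
    rw [mem_oddPart_iff] at hX
    rw [mem_evenPart_iff] at hY
    obtain ⟨a1, a2, a3, a4, a5⟩ := hX
    obtain ⟨b1, b2, b3, b4, b5⟩ := hY
    rw [mem_sl12_iff]
    simp [Matrix.vecHead, Matrix.vecTail, Matrix.sub_apply, Matrix.mul_apply, Fin.sum_univ_three, a1, a2, a3, a4, a5, b1, b2, b3, b4, b5]
    try ring
  · -- odd, odd
    intro X Y hX hY
    rw [mem_oddPart_iff] at hX hY
    obtain ⟨a1, a2, a3, a4, a5⟩ := hX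
    obtain ⟨b1, b2, b3, b4, b5⟩ := hY
    rw [mem_sl12_iff]
    simp [Matrix.vecHead, Matrix.vecTail, Matrix.add_apply, Matrix.mul_apply, Fin.sum_univ_three, a1, a2, a3, a4, a5, b1, b2, b3, b4, b5]
    try ring
  · -- the automorphism ψ
    refine ⟨ψmap, ?_, ?_, ?_, ?_, ?_, ?_, ?_, ?_, ?_, ?_, ?_, ?_, ?_, ?_, ?_⟩
    · ext i j; fin_cases i <;> fin_cases j <;> simp [Matrix.vecHead, Matrix.vecTail, ψmap_apply, e₁p, e₂p]
    · ext i j; fin_cases i <;> fin_cases j <;> simp [Matrix.vecHead, Matrix.vecTail, ψmap_apply, e₁p, e₂p]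
    · ext i j; fin_cases i <;> fin_cases j <;> simp [Matrix.vecHead, Matrix.vecTail, ψmap_apply, e₁m, e₂m]
    · ext i j; fin_cases i <;> fin_cases j <;> simp [Matrix.vecHead, Matrix.vecTail, ψmap_apply, e₁m, e₂m]
    · ext i j; fin_cases i <;> fin_cases j <;> simp [Matrix.vecHead, Matrix.vecTail, ψmap_apply, h₁, h₂]
    · ext i j; fin_cases i <;> fin_cases j <;> simp [Matrix.vecHead, Matrix.vecTail, ψmap_apply, h₁, h₂]
    · ext i j; fin_cases i <;> fin_cases j <;> simp [Matrix.vecHead, Matrix.vecTail, ψmap_apply, Emat]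
    · ext i j; fin_cases i <;> fin_cases j <;> simp [Matrix.vecHead, Matrix.vecTail, ψmap_apply, Fmat]
    · intro X hX
      rw [mem_evenPart_iff] at hX ⊢
      obtain ⟨a1, a2, a3, a4, a5⟩ := hX
      refine ⟨?_, ?_, ?_, ?_, ?_⟩ <;> simp [Matrix.vecHead, Matrix.vecTail, ψmap_apply, a1, a2, a3, a4, a5] <;> ring
    · intro X hX
      rw [mem_oddPart_iff] at hX ⊢
      obtain ⟨a1, a2, a3, a4, a5⟩ := hX
      refine ⟨?_, ?_, ?_, ?_, ?_⟩ <;> simp [Matrix.vecHead, Matrix.vecTail, ψmap_apply, a1, a2, a3, a4, a5]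
    · intro X _
      ext i j; fin_cases i <;> fin_cases j <;> simp [Matrix.vecHead, Matrix.vecTail, ψmap_apply]
    · -- even, even
      intro X Y hX hY
      rw [mem_evenPart_iff] at hX hY
      obtain ⟨a1, a2, a3, a4, a5⟩ := hX
      obtain ⟨b1, b2, b3, b4, b5⟩ := hY
      ext i j
      fin_cases i <;> fin_cases j <;>
        simp [Matrix.vecHead, Matrix.vecTail, ψmap_apply, Matrix.sub_apply, Matrix.mul_apply, Fin.sum_univ_three,
          a1, a2, a3, a4, a5, b1, b2, b3, b4, b5] <;> ring
    · -- even, odd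
      intro X Y hX hY
      rw [mem_evenPart_iff] at hX
      rw [mem_oddPart_iff] at hY
      obtain ⟨a1, a2, a3, a4, a5⟩ := hX
      obtain ⟨b1, b2, b3, b4, b5⟩ := hY
      ext i j
      fin_cases i <;> fin_cases j <;>
        simp [Matrix.vecHead, Matrix.vecTail, ψmap_apply, Matrix.sub_apply, Matrix.mul_apply, Fin.sum_univ_three,
          a1, a2, a3, a4, a5, b1, b2, b3, b4, b5] <;> ring
    · -- odd, even
      intro X Y hX hY
      rw [mem_oddPart_iff] at hX
      rw [mem_evenPart_iff] at hY
      obtain ⟨a1, a2, a3, a4, a5⟩ := hX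
      obtain ⟨b1, b2, b3, b4, b5⟩ := hY
      ext i j
      fin_cases i <;> fin_cases j <;>
        simp [Matrix.vecHead, Matrix.vecTail, ψmap_apply, Matrix.sub_apply, Matrix.mul_apply, Fin.sum_univ_three,
          a1, a2, a3, a4, a5, b1, b2, b3, b4, b5] <;> ring
    · -- odd, odd
      intro X Y hX hY
      rw [mem_oddPart_iff] at hX hY
      obtain ⟨a1, a2, a3, a4, a5⟩ := hX
      obtain ⟨b1, b2, b3, b4, b5⟩ := hY
      ext i j
      fin_cases i <;> fin_cases j <;>
        simp [Matrix.vecHead, Matrix.vecTail, ψmap_apply, Matrix.add_apply, Matrix.mul_apply, Fin.sum_univ_three,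
          a1, a2, a3, a4, a5, b1, b2, b3, b4, b5] <;> ring
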